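/- Let V be a 2n-dimensional real inner product space with orthogonal complex structure J, N a p-dimensional inner product space with p ≤ n-2, and α: V × V → N a symmetric bilinear map such that the tensor R defined by the Gauss equation with c = -1 satisfies R(X,Y)∘J = J∘R(X,Y). Then there exists a J-invariant subspace L ⊆ V with dim L ≥ 2(n-p-1) such that for every nonzero Z ∈ L, the holomorphic sectional curvature K(Z,JZ) := ⟨R(Z,JZ)JZ,Z⟩/‖Z∧JZ‖² satisfies K(Z,JZ) ≤ 0. -/
import Mathlib


open scoped RealInnerProductSpace

/-- The (4,0)-curvature tensor `⟨R(X,Y)Z,W⟩` determined by the Gauss equation in a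
space form of curvature `c`. -/
noncomputable def gaussR {V N : Type*} [NormedAddCommGroup V] [InnerProductSpace ℝ V]
    [NormedAddCommGroup N] [InnerProductSpace ℝ N]
    (c : ℝ) (α : V →ₗ[ℝ] V →ₗ[ℝ] N) (X Y Z W : V) : ℝ :=
  c * (⟪Y, Z⟫ * ⟪X, W⟫ - ⟪X, Z⟫ * ⟪Y, W⟫) + ⟪α X W, α Y Z⟫ - ⟪α X Z, α Y W⟫

section AuxLemmas

variable {V N : Type*} [NormedAddCommGroup V] [InnerProductSpace ℝ V]
  [NormedAddCommGroup N] [InnerProductSpace ℝ N]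

/-- The "complexified second fundamental form together with position vector" map:
for `ζ = (u,v)` representing `u + iv` and `X` representing `X - iJX`, this is
`(Re α(X', ζ), Im α(X', ζ), Re ⟨X', ζ⟩, Im ⟨X', ζ⟩)`. -/
noncomputable def auxB (J : V →ₗ[ℝ] V) (α : V →ₗ[ℝ] V →ₗ[ℝ] N) (ζ : V × V) :
    V →ₗ[ℝ] N × N × ℝ × ℝ where
  toFun X := (α X ζ.1 + α (J X) ζ.2, α X ζ.2 - α (J X) ζ.1,
    ⟪X, ζ.1⟫ + ⟪J X, ζ.2⟫, ⟪X, ζ.2⟫ - ⟪J X, ζ.1⟫)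
  map_add' X Y := by
    simp only [map_add, LinearMap.add_apply, inner_add_left, Prod.mk_add_mk, Prod.mk.injEq]
    refine ⟨by abel, by abel, by ring, by ring⟩
  map_smul' r X := by
    simp only [map_smul, LinearMap.smul_apply, real_inner_smul_left, RingHom.id_apply,
      Prod.smul_mk, Prod.mk.injEq, smul_eq_mul]
    refine ⟨by module, by module, by ring, by ring⟩

/-- Real part of the complex bilinear extension of the Lorentzian pairing on `N ⊕ ℝ`. -/
noncomputable def auxP (w w' : N × N × ℝ × ℝ) : ℝ :=
  ⟪w.1, w'.1⟫ - ⟪w.2.1, w'.2.1⟫ - w.2.2.1 * w'.2.2.1 + w.2.2.2 * w'.2.2.2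

theorem gaussR_swap (c : ℝ) (α : V →ₗ[ℝ] V →ₗ[ℝ] N) (hα : ∀ X Y : V, α X Y = α Y X)
    (X Y Z W : V) : gaussR c α X Y Z W = gaussR c α Z W X Y := by
  simp only [gaussR]
  rw [hα Z Y, hα W X, hα Z X, hα W Y, real_inner_comm (α Y Z) (α X W),
    real_inner_comm (α Y W) (α X Z), real_inner_comm W X, real_inner_comm Z X,
    real_inner_comm Z Y, real_inner_comm W Y]
  ring

theorem gaussR_neg4 (c : ℝ) (α : V →ₗ[ℝ] V →ₗ[ℝ] N) (X Y Z W : V) :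
    gaussR c α X Y Z (-W) = - gaussR c α X Y Z W := by
  simp only [gaussR, inner_neg_right, map_neg, inner_neg_left]
  ring

theorem kaehler_L3 (J : V →ₗ[ℝ] V) (α : V →ₗ[ℝ] V →ₗ[ℝ] N)
    (hα : ∀ X Y : V, α X Y = α Y X)
    (hK : ∀ X Y Z W : V, gaussR (-1) α X Y (J Z) (J W) = gaussR (-1) α X Y Z W)
    (a b u w : V) : gaussR (-1) α (J a) (J b) u w = gaussR (-1) α a b u w := by
  rw [gaussR_swap _ _ hα, hK, gaussR_swap _ _ hα]

theorem kaehler_L4 (J : V →ₗ[ℝ] V) (α : V →ₗ[ℝ] V →ₗ[ℝ] N)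
    (hα : ∀ X Y : V, α X Y = α Y X) (hJ2 : ∀ X : V, J (J X) = -X)
    (hK : ∀ X Y Z W : V, gaussR (-1) α X Y (J Z) (J W) = gaussR (-1) α X Y Z W)
    (a b u w : V) : gaussR (-1) α (J a) b u w + gaussR (-1) α a (J b) u w = 0 := by
  have h1 : gaussR (-1) α u w (J a) (J (J b)) = gaussR (-1) α u w a (J b) := hK u w a (J b)
  rw [hJ2 b, gaussR_neg4] at h1
  rw [gaussR_swap _ _ hα (J a) b u w, gaussR_swap _ _ hα a (J b) u w, ← h1]
  ring

/-- Flatness of the Hermitian-type form `auxB` with respect to `auxP`: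
this encodes `R(X', Y', ·, ·) = 0` for `(1,0)`-vectors `X', Y'`. -/
theorem aux_flat (J : V →ₗ[ℝ] V) (α : V →ₗ[ℝ] V →ₗ[ℝ] N)
    (hα : ∀ X Y : V, α X Y = α Y X) (hJ2 : ∀ X : V, J (J X) = -X)
    (hK : ∀ X Y Z W : V, gaussR (-1) α X Y (J Z) (J W) = gaussR (-1) α X Y Z W)
    (X Y : V) (ζ η : V × V) :
    auxP (auxB J α η X) (auxB J α ζ Y) = auxP (auxB J α ζ X) (auxB J α η Y) := by
  have e1 := kaehler_L3 J α hα hK X Y ζ.1 η.1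
  have e2 := kaehler_L3 J α hα hK X Y ζ.2 η.2
  have e3 := kaehler_L4 J α hα hJ2 hK X Y ζ.1 η.2
  have e4 := kaehler_L4 J α hα hJ2 hK X Y ζ.2 η.1
  simp only [gaussR] at e1 e2 e3 e4
  simp only [auxP, auxB, LinearMap.coe_mk, AddHom.coe_mk, inner_add_left, inner_add_right,
    inner_sub_left, inner_sub_right]
  linear_combination (-1 : ℝ) * e1 + e2 + e3 + e4

theorem auxB_affine (J : V →ₗ[ℝ] V) (α : V →ₗ[ℝ] V →ₗ[ℝ] N) (ζ η : V × V) (t : ℝ) :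
    auxB J α (ζ + t • η) = auxB J α ζ + t • auxB J α η := by
  ext X <;>
  · simp only [auxB, LinearMap.coe_mk, AddHom.coe_mk, Prod.fst_add, Prod.snd_add,
      Prod.smul_fst, Prod.smul_snd, map_add, map_smul, inner_add_right,
      real_inner_smul_right, LinearMap.add_apply, LinearMap.smul_apply, Prod.smul_mk,
      Prod.mk_add_mk, smul_eq_mul]
    first
    | module
    | ring

end AuxLemmas

/-- Rank-perturbation lemma: if a point maximizes the rank of a family of linear
maps along a line, then the perturbing map sends the kernel into the range. -/
theorem aux_pert {V W : Type*} [AddCommGroup V] [Module ℝ V]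
    [NormedAddCommGroup W] [NormedSpace ℝ W] [FiniteDimensional ℝ W]
    (T S : V →ₗ[ℝ] W)
    (hmax : ∀ t : ℝ, Module.finrank ℝ (LinearMap.range (T + t • S)) ≤
      Module.finrank ℝ (LinearMap.range T))
    (X : V) (hX : T X = 0) : S X ∈ LinearMap.range T := by
  by_contra hSX
  set r := Module.finrank ℝ (LinearMap.range T) with hr
  have b := Module.finBasis ℝ ↥(LinearMap.range T)
  rw [← hr] at b
  choose v hv using fun j : Fin r => LinearMap.mem_range.mp (b j).2
  set c : ℝ → Fin (r + 1) → W := fun t => Fin.snoc (fun j => T (v j) + t • S (v j)) (S X)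
    with hc
  have hTv : (fun j : Fin r => T (v j)) = fun j => ((b j : W)) := funext hv
  have hbW : LinearIndependent ℝ fun j : Fin r => ((b j : W)) :=
    b.linearIndependent.map' (Submodule.subtype _) (Submodule.ker_subtype _)
  have hspan : Submodule.span ℝ (Set.range fun j : Fin r => ((b j : W))) =
      LinearMap.range T := by
    have h1 : (Set.range fun j : Fin r => ((b j : W))) =
        (LinearMap.range T).subtype '' Set.range b := by
      rw [← Set.range_comp]; rfl
    rw [h1, Submodule.span_image, b.span_eq, Submodule.map_top, Submodule.range_subtype]
  have h0 : LinearIndependent ℝ (c 0) := by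
    rw [hc]
    simp only [zero_smul, add_zero]
    rw [linearIndependent_fin_snoc, hTv, hspan]
    exact ⟨hbW, hSX⟩
  have hcont : Continuous c := by
    apply continuous_pi
    intro i
    refine Fin.lastCases ?_ ?_ i
    · simp only [hc, Fin.snoc_last]; exact continuous_const
    · intro j
      simp only [hc, Fin.snoc_castSucc]
      exact continuous_const.add (continuous_id.smul continuous_const)
  have hnhds : {t : ℝ | LinearIndependent ℝ (c t)} ∈ nhds (0 : ℝ) :=
    (isOpen_setOf_linearIndependent.preimage hcont).mem_nhds h0
  obtain ⟨ε, hε, hball⟩ := Metric.mem_nhds_iff.mp hnhds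
  set t : ℝ := ε / 2 with htdef
  have ht0 : t ≠ 0 := by positivity
  have hti : LinearIndependent ℝ (c t) := by
    apply hball
    simp only [Metric.mem_ball, Real.dist_eq, sub_zero, htdef]
    rw [abs_of_pos (by positivity)]
    linarith
  have hmem : ∀ i, c t i ∈ LinearMap.range (T + t • S) := by
    intro i
    refine Fin.lastCases ?_ ?_ i
    · simp only [hc, Fin.snoc_last]
      refine ⟨t⁻¹ • X, ?_⟩
      simp only [LinearMap.add_apply, LinearMap.smul_apply, map_smul, hX, smul_zero, zero_add,
        smul_smul, inv_mul_cancel₀ ht0, one_smul]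
    · intro j
      simp only [hc, Fin.snoc_castSucc]
      exact ⟨v j, by simp⟩
  have hle : r + 1 ≤ Module.finrank ℝ (LinearMap.range (T + t • S)) := by
    have hci : LinearIndependent ℝ
        fun i => (⟨c t i, hmem i⟩ : ↥(LinearMap.range (T + t • S))) := by
      apply LinearIndependent.of_comp (LinearMap.range (T + t • S)).subtype
      exact hti
    simpa using hci.fintype_card_le_finrank
  have := hmax t
  omega

/-- pointwise content of Theorem 5 of the paper. -/
theorem stmt_4
    (V N : Type*) [NormedAddCommGroup V] [InnerProductSpace ℝ V] [FiniteDimensional ℝ V]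
    [NormedAddCommGroup N] [InnerProductSpace ℝ N] [FiniteDimensional ℝ N]
    (n p : ℕ) (hp : p + 2 ≤ n)
    (hV : Module.finrank ℝ V = 2 * n) (hN : Module.finrank ℝ N = p)
    (J : V →ₗ[ℝ] V) (hJ2 : ∀ X : V, J (J X) = -X)
    (hJorth : ∀ X Y : V, ⟪J X, J Y⟫ = ⟪X, Y⟫)
    (α : V →ₗ[ℝ] V →ₗ[ℝ] N) (hαsymm : ∀ X Y : V, α X Y = α Y X)
    (hKaehler : ∀ X Y Z W : V,
      gaussR (-1) α X Y (J Z) (J W) = gaussR (-1) α X Y Z W) :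
    ∃ L : Submodule ℝ V, (∀ Z ∈ L, J Z ∈ L) ∧
      2 * (n - p - 1) ≤ Module.finrank ℝ L ∧
      ∀ Z ∈ L, Z ≠ 0 →
        gaussR (-1) α Z (J Z) (J Z) Z / (‖Z‖ ^ 2 * ‖J Z‖ ^ 2 - ⟪Z, J Z⟫ ^ 2) ≤ 0 := by
  classical
  -- basic facts about J
  have hJZ0 : ∀ Z : V, ⟪Z, J Z⟫ = 0 := by
    intro Z
    have h := hJorth Z (J Z)
    rw [hJ2 Z, inner_neg_right] at h
    have h2 := real_inner_comm Z (J Z)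
    linarith
  -- choose a regular element ζ₀
  obtain ⟨ζ₀, hζ₀⟩ : ∃ ζ₀ : V × V, ∀ ζ : V × V,
      Module.finrank ℝ (LinearMap.range (auxB J α ζ)) ≤
        Module.finrank ℝ (LinearMap.range (auxB J α ζ₀)) := by
    set f : V × V → ℕ := fun ζ => Module.finrank ℝ (LinearMap.range (auxB J α ζ)) with hf
    have hbd : ∀ ζ, f ζ ≤ Module.finrank ℝ (N × N × ℝ × ℝ) := fun ζ => Submodule.finrank_le _
    obtain ⟨ζ₀, hζ₀eq⟩ : ∃ ζ, f ζ =
        Nat.findGreatest (fun k => ∃ ζ, f ζ = k) (Module.finrank ℝ (N × N × ℝ × ℝ)) :=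
      Nat.findGreatest_spec (P := fun k => ∃ ζ, f ζ = k) (hbd 0) ⟨(0 : V × V), rfl⟩
    refine ⟨ζ₀, fun ζ => ?_⟩
    show f ζ ≤ f ζ₀
    rw [hζ₀eq]
    exact Nat.le_findGreatest (hbd ζ) ⟨ζ, rfl⟩
  refine ⟨LinearMap.ker (auxB J α ζ₀), ?_, ?_, ?_⟩
  · -- J-invariance of the kernel
    intro Z hZ
    simp only [LinearMap.mem_ker] at hZ ⊢
    simp only [auxB, LinearMap.coe_mk, AddHom.coe_mk, Prod.mk_eq_zero] at hZ ⊢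
    obtain ⟨h1, h2, h3, h4⟩ := hZ
    rw [hJ2 Z]
    simp only [map_neg, LinearMap.neg_apply, inner_neg_left]
    rw [sub_eq_zero] at h2
    refine ⟨?_, ?_, ?_, ?_⟩
    · rw [← h2]; abel
    · rw [sub_neg_eq_add, add_comm]; exact h1
    · linarith
    · linarith [h3]
  · -- dimension bound
    have hrk := LinearMap.finrank_range_add_finrank_ker (auxB J α ζ₀)
    rw [hV] at hrk
    have hWr : Module.finrank ℝ (N × N × ℝ × ℝ) = 2 * p + 2 := by
      simp only [Module.finrank_prod, hN, Module.finrank_self]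
      omega
    have hrle : Module.finrank ℝ (LinearMap.range (auxB J α ζ₀)) ≤ 2 * p + 2 := by
      rw [← hWr]; exact Submodule.finrank_le _
    omega
  · -- nonpositivity of the holomorphic sectional curvature on the kernel
    intro Z hZmem hZ0
    have hZk : auxB J α ζ₀ Z = 0 := LinearMap.mem_ker.mp hZmem
    -- Claim A: B_{(Z,JZ)} Z belongs to the range of B_{ζ₀}
    have hmax : ∀ t : ℝ, Module.finrank ℝ
        (LinearMap.range (auxB J α ζ₀ + t • auxB J α (Z, J Z))) ≤
        Module.finrank ℝ (LinearMap.range (auxB J α ζ₀)) := by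
      intro t
      rw [← auxB_affine]
      exact hζ₀ _
    have hwU := aux_pert (auxB J α ζ₀) (auxB J α (Z, J Z)) hmax Z hZk
    obtain ⟨Y₀, hY₀⟩ := hwU
    -- Claim B + flatness: the vector is isotropic
    have hPw : auxP (auxB J α (Z, J Z) Z) (auxB J α (Z, J Z) Z) = 0 := by
      calc auxP (auxB J α (Z, J Z) Z) (auxB J α (Z, J Z) Z)
          = auxP (auxB J α (Z, J Z) Z) (auxB J α ζ₀ Y₀) := by rw [hY₀]
        _ = auxP (auxB J α ζ₀ Z) (auxB J α (Z, J Z) Y₀) :=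
            aux_flat J α hαsymm hJ2 hKaehler Z Y₀ ζ₀ (Z, J Z)
        _ = 0 := by rw [hZk]; simp [auxP]
    -- unpack the isotropy relation
    have hsym : α (J Z) Z = α Z (J Z) := hαsymm (J Z) Z
    have hJJ : ⟪J Z, J Z⟫ = ⟪Z, Z⟫ := hJorth Z Z
    have hz1 : ⟪Z, J Z⟫ = 0 := hJZ0 Z
    have hz2 : ⟪J Z, Z⟫ = 0 := by rw [real_inner_comm]; exact hz1
    simp only [auxP, auxB, LinearMap.coe_mk, AddHom.coe_mk] at hPw
    rw [hsym, sub_self] at hPw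
    simp only [inner_zero_left, hJJ, hz1, hz2, inner_add_left, inner_add_right] at hPw
    -- numerator is nonpositive
    have hnum : gaussR (-1) α Z (J Z) (J Z) Z ≤ 0 := by
      have hd : (0:ℝ) ≤ ⟪α Z Z - α (J Z) (J Z), α Z Z - α (J Z) (J Z)⟫ :=
        real_inner_self_nonneg
      have hcc : (0:ℝ) ≤ ⟪α Z (J Z), α Z (J Z)⟫ := real_inner_self_nonneg
      simp only [inner_sub_left, inner_sub_right] at hd
      simp only [gaussR]
      rw [hsym, hJJ, hz1, hz2]
      nlinarith [hPw, hd, hcc, real_inner_comm (α (J Z) (J Z)) (α Z Z)]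
    -- denominator is positive
    have hden : ‖Z‖ ^ 2 * ‖J Z‖ ^ 2 - ⟪Z, J Z⟫ ^ 2 = ⟪Z, Z⟫ * ⟪Z, Z⟫ := by
      rw [hz1, ← real_inner_self_eq_norm_sq, ← real_inner_self_eq_norm_sq, hJJ]
      ring
    have hzz : (0:ℝ) < ⟪Z, Z⟫ :=
      lt_of_le_of_ne real_inner_self_nonneg
        (fun h => hZ0 (inner_self_eq_zero.mp h.symm))
    have hdpos : (0:ℝ) < ⟪Z, Z⟫ * ⟪Z, Z⟫ := mul_pos hzz hzz
    rw [hden]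
    exact div_nonpos_of_nonpos_of_nonneg hnum hdpos.le
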